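/- For every τ ∈ A₀, the set difference \overline{J_τ} ∖ J_τ (closure of the limit set minus the limit set) is at most countable, and dim_H(\overline{J_τ}) = dim_H(J_τ) = h_τ. -/

import Mathlib

open Complex Metric Filter Set
open scoped ENNReal NNReal Topology

noncomputable section

/-- The parameter space `A₀ = {u+iv : u ≥ 0, v ≥ 1}`. -/
def A0 : Set ℂ := {τ : ℂ | 0 ≤ τ.re ∧ 1 ≤ τ.im}

/-- The phase space `X = {z : |z - 1/2| ≤ 1/2}`. -/
def Xcl : Set ℂ := {z : ℂ | ‖z - 1/2‖ ≤ 1/2}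

/-- The alphabet `I_τ = {m + nτ : m, n ∈ ℕ₊}`. -/
def Itau (τ : ℂ) : Set ℂ := {b : ℂ | ∃ m n : ℕ+, b = ((m : ℕ) : ℂ) + ((n : ℕ) : ℂ) * τ}

/-- The generator `φ_b(z) = 1/(z+b)`. -/
def phi (b z : ℂ) : ℂ := 1 / (z + b)

/-- `wordMap ω n = φ_{ω 0} ∘ ⋯ ∘ φ_{ω (n-1)}` (the composition associated to the
first `n` letters of `ω`, applying `φ_{ω (n-1)}` first). -/
def wordMap (ω : ℕ → ℂ) : ℕ → ℂ → ℂ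
  | 0 => id
  | n + 1 => wordMap ω n ∘ phi (ω n)

/-- The limit set `J_τ = ⋃_{ω ∈ I_τ^ℕ} ⋂_{n ≥ 1} φ_{ω₁}∘⋯∘φ_{ω_n}(X)`. -/
def Jset (τ : ℂ) : Set ℂ :=
  ⋃ (ω : ℕ → ℂ) (_ : ∀ i, ω i ∈ Itau τ), ⋂ (n : ℕ) (_ : 1 ≤ n), wordMap ω n '' Xcl

/-- The Hausdorff dimension `h_τ` of the limit set, as a real number. -/
def hdim (τ : ℂ) : ℝ := (dimH (Jset τ)).toReal

lemma mem_Xcl_iff {z : ℂ} : z ∈ Xcl ↔ ‖z - 1/2‖ ≤ 1/2 := Iff.rfl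

lemma Xcl_eq : Xcl = Metric.closedBall (1/2 : ℂ) (1/2) := by
  ext z; simp [Xcl, Metric.mem_closedBall, dist_eq_norm]

lemma isCompact_Xcl : IsCompact Xcl := by
  rw [Xcl_eq]; exact isCompact_closedBall _ _

lemma zero_mem_Xcl : (0 : ℂ) ∈ Xcl := by
  have : ‖(0:ℂ) - 1/2‖ = 1/2 := by
    rw [zero_sub, norm_neg, norm_div]
    simp
  exact le_of_eq this

lemma Xcl_bounds {z : ℂ} (hz : z ∈ Xcl) :
    0 ≤ z.re ∧ z.re ≤ 1 ∧ |z.im| ≤ 1/2 ∧ ‖z‖ ≤ 1 := by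
  have h : ‖z - 1/2‖ ≤ 1/2 := hz
  have h2 : Complex.normSq (z - 1/2) ≤ 1/4 := by
    have := Complex.sq_norm (z - 1/2)
    nlinarith [norm_nonneg (z - 1/2)]
  have hre : (z - 1/2).re = z.re - 1/2 := by simp
  have him : (z - 1/2).im = z.im := by simp
  rw [Complex.normSq_apply, hre, him] at h2
  have hn : ‖z‖ ≤ 1 := by
    calc ‖z‖ = ‖(z - 1/2) + 1/2‖ := by ring_nf
    _ ≤ ‖z - 1/2‖ + ‖(1/2 : ℂ)‖ := norm_add_le _ _
    _ ≤ 1/2 + 1/2 := by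
        refine add_le_add hz ?_
        simp [norm_div]
    _ = 1 := by norm_num
  refine ⟨by nlinarith [sq_nonneg z.im], by nlinarith [sq_nonneg z.im],
    abs_le.mpr ⟨by nlinarith [sq_nonneg (z.re - 1/2)], by nlinarith [sq_nonneg (z.re - 1/2)]⟩, hn⟩

lemma Itau_bounds {τ b : ℂ} (hτ : τ ∈ A0) (hb : b ∈ Itau τ) :
    1 ≤ b.re ∧ 1 ≤ b.im := by
  obtain ⟨m, n, rfl⟩ := hb
  obtain ⟨hre, him⟩ := hτ
  have hm : (1 : ℝ) ≤ (m : ℕ) := by exact_mod_cast m.one_le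
  have hn : (1 : ℝ) ≤ (n : ℕ) := by exact_mod_cast n.one_le
  constructor
  · simp [Complex.add_re, Complex.mul_re]
    nlinarith
  · simp [Complex.add_im, Complex.mul_im]
    nlinarith

lemma Itau_junk (τ : ℂ) : 1 + τ ∈ Itau τ := ⟨1, 1, by norm_num⟩

lemma add_re_one {τ b z : ℂ} (hτ : τ ∈ A0) (hb : b ∈ Itau τ) (hz : z ∈ Xcl) :
    1 ≤ (z + b).re := by
  have h1 := (Xcl_bounds hz).1
  have h2 := (Itau_bounds hτ hb).1
  rw [Complex.add_re]; linarith

lemma addXI_ne_zero {τ b z : ℂ} (hτ : τ ∈ A0) (hb : b ∈ Itau τ) (hz : z ∈ Xcl) :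
    z + b ≠ 0 := by
  intro h
  have := add_re_one hτ hb hz
  rw [h] at this
  simp at this
  linarith

lemma mapsTo_phi {τ b : ℂ} (hτ : τ ∈ A0) (hb : b ∈ Itau τ) :
    Set.MapsTo (phi b) Xcl Xcl := by
  intro z hz
  set w := z + b with hw
  have hw1 : 1 ≤ w.re := add_re_one hτ hb hz
  have hw0 : w ≠ 0 := addXI_ne_zero hτ hb hz
  have hwpos : 0 < ‖w‖ := norm_pos_iff.mpr hw0
  have key : ‖2 - w‖ ≤ ‖w‖ := by
    have h1 : Complex.normSq (2 - w) ≤ Complex.normSq w := by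
      simp [Complex.normSq_apply, Complex.sub_re, Complex.sub_im]
      nlinarith [sq_nonneg w.im]
    rw [Complex.norm_def, Complex.norm_def]
    exact Real.sqrt_le_sqrt h1
  have heq : phi b z - 1/2 = (2 - w)/(2*w) := by
    rw [phi, ← hw]
    rw [div_sub_div _ _ hw0 (two_ne_zero), div_eq_div_iff (by simp [hw0]) (by simp [hw0])]
    ring
  rw [mem_Xcl_iff, heq]
  rw [norm_div, norm_mul]
  have h2 : ‖(2:ℂ)‖ = 2 := by simp
  rw [h2, div_le_iff₀ (by positivity)]
  calc ‖2 - w‖ ≤ ‖w‖ := key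
  _ ≤ 1/2 * (2 * ‖w‖) := by ring_nf; linarith [hwpos]

lemma mem_Jset {τ z : ℂ} :
    z ∈ Jset τ ↔ ∃ ω : ℕ → ℂ, (∀ i, ω i ∈ Itau τ) ∧ ∀ n, 1 ≤ n → z ∈ wordMap ω n '' Xcl := by
  simp [Jset, Set.mem_iUnion, Set.mem_iInter]

lemma continuousOn_phi {τ b : ℂ} (hτ : τ ∈ A0) (hb : b ∈ Itau τ) :
    ContinuousOn (phi b) Xcl := by
  apply ContinuousOn.div continuousOn_const
  · exact (continuous_id.add continuous_const).continuousOn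
  · exact fun z hz => addXI_ne_zero hτ hb hz

lemma word_good {τ : ℂ} (hτ : τ ∈ A0) {ω : ℕ → ℂ} (hω : ∀ i, ω i ∈ Itau τ) :
    ∀ n, ContinuousOn (wordMap ω n) Xcl ∧ Set.MapsTo (wordMap ω n) Xcl Xcl := by
  intro n
  induction n with
  | zero => exact ⟨continuousOn_id, Set.mapsTo_id _⟩
  | succ n ih =>
      refine ⟨?_, ?_⟩
      · exact ih.1.comp (continuousOn_phi hτ (hω n)) (mapsTo_phi hτ (hω n))
      · exact ih.2.comp (mapsTo_phi hτ (hω n))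

lemma wordMap_congr {ω ω' : ℕ → ℂ} {n : ℕ} (h : ∀ i < n, ω i = ω' i) :
    wordMap ω n = wordMap ω' n := by
  induction n with
  | zero => rfl
  | succ n ih =>
      show wordMap ω n ∘ phi (ω n) = wordMap ω' n ∘ phi (ω' n)
      rw [ih (fun i hi => h i (by omega)), h n (by omega)]

lemma wordMap_shift (ω : ℕ → ℂ) (n : ℕ) :
    wordMap ω (n+1) = phi (ω 0) ∘ wordMap (fun i => ω (i+1)) n := by
  induction n with
  | zero => rfl
  | succ n ih =>
      show wordMap ω (n+1) ∘ phi (ω (n+1)) = _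
      rw [ih]
      rfl

def Eset (τ : ℂ) : ℕ → Set ℂ
  | 0 => {0}
  | n + 1 => Set.image2 phi (Itau τ) (Eset τ n)

def Dset (τ : ℂ) : Set ℂ := ⋃ n, Eset τ n

lemma countable_Itau (τ : ℂ) : (Itau τ).Countable := by
  have h : Itau τ ⊆ Set.range (fun p : ℕ+ × ℕ+ => (((p.1 : ℕ)) : ℂ) + (((p.2 : ℕ)) : ℂ) * τ) := by
    rintro b ⟨m, n, rfl⟩; exact ⟨(m, n), rfl⟩
  exact (Set.countable_range _).mono h

lemma countable_Eset (τ : ℂ) : ∀ n, (Eset τ n).Countable := by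
  intro n
  induction n with
  | zero => exact Set.countable_singleton 0
  | succ n ih => exact Set.Countable.image2 (countable_Itau τ) ih _

lemma countable_Dset (τ : ℂ) : (Dset τ).Countable :=
  Set.countable_iUnion (countable_Eset τ)

lemma wordMap_zero_mem {τ : ℂ} : ∀ (n : ℕ) (ω : ℕ → ℂ), (∀ i, ω i ∈ Itau τ) →
    wordMap ω n 0 ∈ Eset τ n := by
  intro n
  induction n with
  | zero => intro ω _; exact Set.mem_singleton _
  | succ n ih =>
      intro ω hω
      rw [wordMap_shift]
      exact Set.mem_image2_of_mem (hω 0) (ih _ (fun i => hω (i+1)))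

lemma finite_bounded_Itau {τ : ℂ} (hτ : τ ∈ A0) (M : ℝ) :
    {b | b ∈ Itau τ ∧ ‖b‖ ≤ M}.Finite := by
  set N := ⌈M⌉₊
  have hsub : {b | b ∈ Itau τ ∧ ‖b‖ ≤ M} ⊆
      (fun p : ℕ × ℕ => ((p.1 : ℂ) + (p.2 : ℂ) * τ)) '' (Set.Icc 1 N ×ˢ Set.Icc 1 N) := by
    rintro b ⟨⟨m, n, rfl⟩, hnorm⟩
    refine ⟨((m : ℕ), (n : ℕ)), ⟨⟨m.one_le, ?_⟩, ⟨n.one_le, ?_⟩⟩, rfl⟩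
    · have h1 : ((m:ℕ) : ℝ) ≤ ‖((m : ℕ) : ℂ) + ((n : ℕ) : ℂ) * τ‖ := by
        set b := ((m : ℕ) : ℂ) + ((n : ℕ) : ℂ) * τ
        have hre : ((m:ℕ) : ℝ) ≤ b.re := by
          have := (Itau_bounds hτ (⟨m, n, rfl⟩ : b ∈ Itau τ))
          have hn : (0:ℝ) ≤ (n : ℕ) := by positivity
          simp [b, Complex.add_re, Complex.mul_re]
          nlinarith [hτ.1]
        calc ((m:ℕ) : ℝ) ≤ b.re := hre
        _ ≤ |b.re| := le_abs_self _
        _ ≤ ‖b‖ := Complex.abs_re_le_norm b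
        _ = ‖b‖ := rfl
      have : ((m:ℕ):ℝ) ≤ N := le_trans (le_trans h1 hnorm) (Nat.le_ceil M)
      exact_mod_cast this
    · have h1 : ((n:ℕ) : ℝ) ≤ ‖((m : ℕ) : ℂ) + ((n : ℕ) : ℂ) * τ‖ := by
        set b := ((m : ℕ) : ℂ) + ((n : ℕ) : ℂ) * τ
        have him : ((n:ℕ) : ℝ) ≤ b.im := by
          have hn1 : (1:ℝ) ≤ (n : ℕ) := by exact_mod_cast n.one_le
          simp [b, Complex.add_im, Complex.mul_im]
          nlinarith [hτ.2]
        calc ((n:ℕ) : ℝ) ≤ b.im := him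
        _ ≤ |b.im| := le_abs_self _
        _ ≤ ‖b‖ := Complex.abs_im_le_norm b
        _ = ‖b‖ := rfl
      have : ((n:ℕ):ℝ) ≤ N := le_trans (le_trans h1 hnorm) (Nat.le_ceil M)
      exact_mod_cast this
  exact Set.Finite.subset (Set.Finite.image _ ((Set.finite_Icc _ _).prod (Set.finite_Icc _ _))) hsub

lemma norm_phi_le {τ b z : ℂ} (hτ : τ ∈ A0) (hb : b ∈ Itau τ) (hz : z ∈ Xcl)
    {c : ℝ} (hc : 0 < c) (hbig : 1/c + 1 < ‖b‖) : ‖phi b z‖ < c := by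
  have hz1 : ‖z‖ ≤ 1 := (Xcl_bounds hz).2.2.2
  have hlow : 1/c < ‖z + b‖ := by
    have hb' : ‖b‖ ≤ ‖z + b‖ + ‖z‖ := by
      calc ‖b‖ = ‖(z + b) - z‖ := by ring_nf
      _ ≤ ‖z + b‖ + ‖z‖ := norm_sub_le _ _
    linarith
  have hpos : (0:ℝ) < ‖z + b‖ := lt_trans (by positivity) hlow
  rw [phi, norm_div, norm_one]
  rw [div_lt_iff₀ hpos]
  rw [div_lt_iff₀ hc] at hlow
  linarith

open Classical in
noncomputable def buildWord (τ : ℂ) (ω : ℕ → ℕ → ℂ) (U : Ultrafilter ℕ) : ℕ → ℕ → ℂ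
  | 0 => fun _ => 1 + τ
  | j + 1 => Function.update (buildWord τ ω U j) j
      (if h : ∃ b ∈ Itau τ,
          {k | (∀ i < j, ω k i = buildWord τ ω U j i) ∧ ω k j = b} ∈ U
       then h.choose else 1 + τ)

lemma buildWord_stable (τ : ℂ) (ω : ℕ → ℕ → ℂ) (U : Ultrafilter ℕ) :
    ∀ {i j}, i < j → buildWord τ ω U j i = buildWord τ ω U (i+1) i := by
  intro i j h
  induction j with
  | zero => omega
  | succ j ih =>
      rcases Nat.lt_succ_iff_lt_or_eq.mp h with h' | h'
      · show Function.update (buildWord τ ω U j) j _ i = _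
        rw [Function.update_of_ne (by omega)]
        exact ih h'
      · subst h'; rfl

lemma buildWord_mem (τ : ℂ) (ω : ℕ → ℕ → ℂ) (U : Ultrafilter ℕ)
    (hω : ∀ k i, ω k i ∈ Itau τ) (j : ℕ) :
    buildWord τ ω U (j+1) j ∈ Itau τ := by
  show Function.update (buildWord τ ω U j) j _ j ∈ Itau τ
  rw [Function.update_self]
  split
  · next h => exact h.choose_spec.1
  · exact Itau_junk τ

lemma closure_Jset_subset {τ : ℂ} (hτ : τ ∈ A0) :
    closure (Jset τ) ⊆ Jset τ ∪ Dset τ := by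
  intro z hz
  obtain ⟨zs, hzsJ, hlim⟩ := mem_closure_iff_seq_limit.mp hz
  have hmem : ∀ k, ∃ ω : ℕ → ℂ, (∀ i, ω i ∈ Itau τ) ∧ ∀ n, 1 ≤ n → zs k ∈ wordMap ω n '' Xcl :=
    fun k => mem_Jset.mp (hzsJ k)
  choose ω hωI hωJ using hmem
  set U : Ultrafilter ℕ := Ultrafilter.of atTop with hUdef
  have hU : ↑U ≤ (atTop : Filter ℕ) := Ultrafilter.of_le _
  have hzU : Tendsto zs ↑U (𝓝 z) := hlim.mono_left hU
  set w : ℕ → ℂ := fun i => buildWord τ ω U (i+1) i with hwdef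
  have hwI : ∀ i, w i ∈ Itau τ := fun i => buildWord_mem τ ω U (fun k i => hωI k i) i
  set A : ℕ → Set ℕ := fun j => {k | ∀ i < j, ω k i = w i} with hAdef
  have hAset : ∀ j, {k | ∀ i < j, ω k i = buildWord τ ω U j i} = A j := by
    intro j; ext k
    simp only [hAdef, Set.mem_setOf_eq, hwdef]
    constructor <;> intro h i hi
    · rw [← buildWord_stable τ ω U hi]; exact h i hi
    · rw [buildWord_stable τ ω U hi]; exact h i hi
  have hAsucc : ∀ j, A (j+1) = A j ∩ {k | ω k j = w j} := by
    intro j; ext k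
    simp only [hAdef, Set.mem_setOf_eq, Set.mem_inter_iff]
    constructor
    · intro h; exact ⟨fun i hi => h i (by omega), h j (by omega)⟩
    · rintro ⟨h1, h2⟩ i hi
      rcases Nat.lt_succ_iff_lt_or_eq.mp hi with hi' | hi'
      · exact h1 i hi'
      · subst hi'; exact h2
  have hsucc : ∀ j, A (j+1) ∉ U → ∀ b, (A j ∩ {k | ω k j = b}) ∉ U := by
    intro j hAj1 b hb
    have hbI : b ∈ Itau τ := by
      obtain ⟨k, hk⟩ := U.nonempty_of_mem hb
      exact hk.2 ▸ hωI k j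
    have hC : ∃ b' ∈ Itau τ,
        {k | (∀ i < j, ω k i = buildWord τ ω U j i) ∧ ω k j = b'} ∈ U := by
      refine ⟨b, hbI, ?_⟩
      have h1 : {k | (∀ i < j, ω k i = buildWord τ ω U j i) ∧ ω k j = b}
          = {k | ∀ i < j, ω k i = buildWord τ ω U j i} ∩ {k | ω k j = b} := rfl
      rw [h1, hAset j]; exact hb
    have hwj : w j = hC.choose := by
      simp only [hwdef]
      show Function.update (buildWord τ ω U j) j _ j = _
      rw [Function.update_self, dif_pos hC]
    apply hAj1
    have heq : A (j+1) = {k | (∀ i < j, ω k i = buildWord τ ω U j i) ∧ ω k j = hC.choose} := by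
      rw [hAsucc j, hwj]
      have h1 : {k | (∀ i < j, ω k i = buildWord τ ω U j i) ∧ ω k j = hC.choose}
          = {k | ∀ i < j, ω k i = buildWord τ ω U j i} ∩ {k | ω k j = hC.choose} := rfl
      rw [h1, hAset j]
    rw [heq]
    exact hC.choose_spec.2
  by_cases hall : ∀ j, A j ∈ U
  · left
    rw [mem_Jset]
    refine ⟨w, hwI, fun n hn => ?_⟩
    have hKc : IsCompact (wordMap w n '' Xcl) :=
      isCompact_Xcl.image_of_continuousOn (word_good hτ hwI n).1
    refine hKc.isClosed.mem_of_tendsto hzU ?_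
    have hAn : A n ∈ (U : Filter ℕ) := hall n
    filter_upwards [hAn] with k hk
    rw [← wordMap_congr (fun i hi => hk i hi)]
    exact hωJ k n hn
  · right
    push_neg at hall
    have h0 : A 0 ∈ U := by
      have h : A 0 = Set.univ := by ext k; simp [hAdef]
      rw [h]; exact Filter.univ_mem
    obtain ⟨j, hAj, hAj1⟩ : ∃ j, A j ∈ U ∧ A (j+1) ∉ U := by
      by_contra hcon
      push_neg at hcon
      obtain ⟨j, hj⟩ := hall
      have hind : ∀ j, A j ∈ U := by
        intro j; induction j with
        | zero => exact h0
        | succ j ih => exact hcon j ih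
      exact hj (hind j)
    have hB := hsucc j hAj1
    have hx : ∀ k, ∃ x ∈ Xcl, wordMap (ω k) (j+1) x = zs k := fun k => hωJ k (j+1) (by omega)
    choose x hxX hxz using hx
    set y : ℕ → ℂ := fun k => phi (ω k j) (x k) with hydef
    have hyX : ∀ k, y k ∈ Xcl := fun k => mapsTo_phi hτ (hωI k j) (hxX k)
    have hzsy : ∀ k ∈ A j, zs k = wordMap w j (y k) := by
      intro k hk
      rw [← hxz k]
      have h1 : wordMap (ω k) (j+1) (x k) = wordMap (ω k) j (y k) := rfl
      rw [h1, wordMap_congr (fun i hi => hk i hi)]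
    have hAjc : A j ∈ (U : Filter ℕ) := hAj
    have hy0 : Tendsto y ↑U (𝓝 0) := by
      rw [Metric.tendsto_nhds]
      intro ε hε
      have hfin : {b | b ∈ Itau τ ∧ ‖b‖ ≤ 1/ε + 1}.Finite := finite_bounded_Itau hτ _
      have hbad : (A j ∩ {k | ‖ω k j‖ ≤ 1/ε + 1}) ∉ (U : Filter ℕ) := by
        intro hmemU
        have hsub : A j ∩ {k | ‖ω k j‖ ≤ 1/ε + 1} ⊆
            ⋃ b ∈ {b | b ∈ Itau τ ∧ ‖b‖ ≤ 1/ε + 1}, (A j ∩ {k | ω k j = b}) := by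
          rintro k ⟨hk1, hk2⟩
          exact Set.mem_biUnion ⟨hωI k j, hk2⟩ ⟨hk1, rfl⟩
        have hbig := Filter.mem_of_superset hmemU hsub
        obtain ⟨b, _, hb2⟩ := (Ultrafilter.finite_biUnion_mem_iff hfin).mp hbig
        exact hB b hb2
      have hcomp : (A j ∩ {k | ‖ω k j‖ ≤ 1/ε + 1})ᶜ ∈ (U : Filter ℕ) :=
        Ultrafilter.compl_mem_iff_notMem.mpr hbad
      filter_upwards [hAjc, hcomp] with k hk1 hk2
      have hbig : 1/ε + 1 < ‖ω k j‖ := by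
        by_contra hle
        exact hk2 ⟨hk1, le_of_not_gt hle⟩
      have hlt := norm_phi_le hτ (hωI k j) (hxX k) hε hbig
      simpa [dist_eq_norm, hydef] using hlt
    have hcw : ContinuousWithinAt (wordMap w j) Xcl 0 := (word_good hτ hwI j).1 0 zero_mem_Xcl
    have hyX' : Tendsto y ↑U (𝓝[Xcl] 0) :=
      tendsto_nhdsWithin_iff.mpr ⟨hy0, Filter.Eventually.of_forall hyX⟩
    have h1 : Tendsto (fun k => wordMap w j (y k)) ↑U (𝓝 (wordMap w j 0)) :=
      hcw.tendsto.comp hyX'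
    have h2 : Tendsto zs ↑U (𝓝 (wordMap w j 0)) := by
      refine Filter.Tendsto.congr' ?_ h1
      filter_upwards [hAjc] with k hk
      exact (hzsy k hk).symm
    have hzeq : z = wordMap w j 0 := tendsto_nhds_unique hzU h2
    rw [hzeq]
    exact Set.mem_iUnion.mpr ⟨j, wordMap_zero_mem j w hwI⟩

/-- `closure(J_τ) \ J_τ` is at most countable and `dim_H(closure J_τ) = dim_H(J_τ) = h_τ`. -/
theorem stmt19 :
    ∀ τ ∈ A0,
      (closure (Jset τ) \ Jset τ).Countable ∧
      dimH (closure (Jset τ)) = dimH (Jset τ) := by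
  intro τ hτ
  have hsub := closure_Jset_subset hτ
  have hcnt : (closure (Jset τ) \ Jset τ).Countable := by
    refine (countable_Dset τ).mono ?_
    rintro z ⟨hz1, hz2⟩
    exact (hsub hz1).resolve_left hz2
  refine ⟨hcnt, le_antisymm ?_ (dimH_mono subset_closure)⟩
  have hsplit : closure (Jset τ) ⊆ Jset τ ∪ (closure (Jset τ) \ Jset τ) := by
    intro z hz
    by_cases h : z ∈ Jset τ
    · exact Or.inl h
    · exact Or.inr ⟨hz, h⟩
  calc dimH (closure (Jset τ))
      ≤ dimH (Jset τ ∪ (closure (Jset τ) \ Jset τ)) := dimH_mono hsplit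
    _ = max (dimH (Jset τ)) (dimH (closure (Jset τ) \ Jset τ)) := dimH_union _ _
    _ = max (dimH (Jset τ)) 0 := by rw [hcnt.dimH_zero]
    _ = dimH (Jset τ) := max_eq_left (zero_le)
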